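/- arXiv:1603.05182 — 2 statements merged into one kernel-verified Lean document; each statement's English description precedes it below -/
import Mathlib

section
/- For every symmetric operator O on H_m, the intertwining identity 𝒢[O] ∘ G = |S| · (G ∘ O) holds, where |S| is the cardinality of the symmetry group S. -/
set_option linter.unusedSectionVars false

noncomputable section

namespace GaugingFractal

/-- The sign `(-1)^t` attached to a `ZMod 2` exponent. -/
def sgn (t : ZMod 2) : ℂ := (-1 : ℂ) ^ t.val

lemma sgn_mul_self (t : ZMod 2) : sgn t * sgn t = 1 := by
  unfold sgn
  rw [← pow_add, ← two_mul, pow_mul]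
  norm_num

lemma zmodfun_add_self {K : Type*} (k : K → ZMod 2) : k + k = 0 := by
  funext j
  exact CharTwo.add_self_eq_zero _

/-- Hilbert space of qubits labelled by a finite set `K`; the computational basis
vector `e_a` is indexed by a pattern `a : K → ZMod 2`. -/
abbrev HS (K : Type*) := EuclideanSpace ℂ (K → ZMod 2)

section Single
variable {K : Type*} [Fintype K] [DecidableEq K]

/-- Pauli X operator: `X(p) e_a = e_{a+p}`. -/
def XOp (p : K → ZMod 2) : HS K →ₗ[ℂ] HS K where
  toFun ψ := WithLp.toLp 2 (fun a => ψ (a + p))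
  map_add' _ _ := rfl
  map_smul' _ _ := rfl

/-- Pauli Z operator: `Z(p) e_a = (-1)^{Σ_i p i * a i} e_a`. -/
def ZOp (p : K → ZMod 2) : HS K →ₗ[ℂ] HS K where
  toFun ψ := WithLp.toLp 2 (fun a => sgn (∑ i, p i * a i) * ψ a)
  map_add' ψ φ := by
    ext a
    exact mul_add _ _ _
  map_smul' c ψ := by
    ext a
    simp only [RingHom.id_apply, PiLp.smul_apply, smul_eq_mul]
    ring

end Single

section Pair

variable {I J : Type*} [Fintype I] [DecidableEq I] [Fintype J] [DecidableEq J]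

/-- Hilbert space of the matter qubits (labelled by `I`) tensored with the gauge
qubits (labelled by `J`): the computational basis vector indexed by `(a, b)`
realizes the tensor product `e_a ⊗ f_b`. -/
abbrev HS2 (I J : Type*) := EuclideanSpace ℂ ((I → ZMod 2) × (J → ZMod 2))

/-- `X(p) ⊗ X_g(q)` on `H_m ⊗ H_g`. -/
def XXOp (p : I → ZMod 2) (q : J → ZMod 2) : HS2 I J →ₗ[ℂ] HS2 I J where
  toFun ψ := WithLp.toLp 2 (fun ab => ψ (ab.1 + p, ab.2 + q))
  map_add' _ _ := rfl
  map_smul' _ _ := rfl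

/-- `X(p) ⊗ Z_g(q)` on `H_m ⊗ H_g`. -/
def XZOp (p : I → ZMod 2) (q : J → ZMod 2) : HS2 I J →ₗ[ℂ] HS2 I J where
  toFun ψ := WithLp.toLp 2 (fun ab => sgn (∑ j, q j * ab.2 j) * ψ (ab.1 + p, ab.2))
  map_add' ψ φ := by
    ext ab
    exact mul_add _ _ _
  map_smul' c ψ := by
    ext ab
    simp only [RingHom.id_apply, PiLp.smul_apply, smul_eq_mul]
    ring

/-- `Z(p) ⊗ X_g(q)` on `H_m ⊗ H_g`. -/
def ZXOp (p : I → ZMod 2) (q : J → ZMod 2) : HS2 I J →ₗ[ℂ] HS2 I J where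
  toFun ψ := WithLp.toLp 2 (fun ab => sgn (∑ i, p i * ab.1 i) * ψ (ab.1, ab.2 + q))
  map_add' ψ φ := by
    ext ab
    exact mul_add _ _ _
  map_smul' c ψ := by
    ext ab
    simp only [RingHom.id_apply, PiLp.smul_apply, smul_eq_mul]
    ring

/-- The flux operator `1 ⊗ Z_g(k)` on `H_m ⊗ H_g`. -/
def IZOp (k : J → ZMod 2) : HS2 I J →ₗ[ℂ] HS2 I J := XZOp 0 k

variable (A : J → Finset I)

/-- The boundary map `∂ : (I → ZMod 2) → (J → ZMod 2)`, `(∂p)(j) = Σ_{i ∈ A j} p(i)`. -/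
def bnd (p : I → ZMod 2) : J → ZMod 2 := fun j => ∑ i ∈ A j, p i

/-- The coboundary map `δ : (J → ZMod 2) → (I → ZMod 2)`, `(δk)(i) = Σ_{j : i ∈ A j} k(j)`. -/
def cobnd (k : J → ZMod 2) : I → ZMod 2 :=
  fun i => ∑ j ∈ Finset.univ.filter (fun j => i ∈ A j), k j

/-- The indicator pattern `χ_i` of a matter qubit `i`. -/
def chi (i : I) : I → ZMod 2 := Pi.single i 1

/-- The indicator pattern `κ_j` of a gauge qubit `j`. -/
def kap (j : J) : J → ZMod 2 := Pi.single j 1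

/-- The local gauge constraint `C_i = X(χ_i) ⊗ X_g(∂χ_i)`. -/
def C (i : I) : HS2 I J →ₗ[ℂ] HS2 I J := XXOp (chi i) (bnd A (chi i))

lemma XXOp_mul (p p' : I → ZMod 2) (q q' : J → ZMod 2) :
    (XXOp p q : Module.End ℂ (HS2 I J)) * XXOp p' q' = XXOp (p + p') (q + q') := by
  apply LinearMap.ext
  intro ψ
  ext ab
  show ψ (ab.1 + p + p', ab.2 + q + q') = ψ (ab.1 + (p + p'), ab.2 + (q + q'))
  rw [add_assoc, add_assoc]

lemma C_commute (i i' : I) : Commute (C A i) (C A i') := by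
  show C A i * C A i' = C A i' * C A i
  unfold C
  rw [XXOp_mul, XXOp_mul, add_comm (chi i) (chi i'),
    add_comm (bnd A (chi i)) (bnd A (chi i'))]

/-- The product of gauge constraints `C^s = Π_{i : s i = 1} C_i`. -/
def Cprod (s : I → ZMod 2) : Module.End ℂ (HS2 I J) :=
  (Finset.univ.filter fun i => s i = 1).noncommProd (fun i => C A i)
    (fun i _ j _ _ => C_commute A i j)

lemma Chalf_commute (i i' : I) :
    Commute ((2 : ℂ)⁻¹ • (1 + C A i)) ((2 : ℂ)⁻¹ • (1 + C A i')) := by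
  have h : Commute (1 + C A i) (1 + C A i') :=
    (Commute.one_left _).add_left ((Commute.one_right _).add_right (C_commute A i i'))
  exact (h.smul_left _).smul_right _

/-- The projector `P = Π_{i ∈ I} (1 + C_i)/2` onto the gauge invariant subspace. -/
def Pproj : Module.End ℂ (HS2 I J) :=
  Finset.univ.noncommProd (fun i => (2 : ℂ)⁻¹ • (1 + C A i))
    (fun i _ j _ _ => Chalf_commute A i j)

/-- `ψ ↦ ψ ⊗ f_0`, the inclusion `1_m ⊗ |f_0⟩ : H_m → H_m ⊗ H_g` determined by the
all-zeros gauge basis vector `f_0`. -/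
def incl : HS I →ₗ[ℂ] HS2 I J where
  toFun ψ := WithLp.toLp 2 (fun ab => if ab.2 = 0 then ψ ab.1 else 0)
  map_add' ψ φ := by
    ext ab
    by_cases h : ab.2 = 0 <;> simp [h]
  map_smul' c ψ := by
    ext ab
    by_cases h : ab.2 = 0 <;> simp [h]

/-- The compression `1_m ⊗ ⟨f_0| : H_m ⊗ H_g → H_m`. -/
def res0 : HS2 I J →ₗ[ℂ] HS I where
  toFun ψ := WithLp.toLp 2 (fun a => ψ (a, 0))
  map_add' _ _ := rfl
  map_smul' _ _ := rfl

/-- The state gauging map `G ψ = P (ψ ⊗ f_0)`. -/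
def Gmap : HS I →ₗ[ℂ] HS2 I J := Pproj A ∘ₗ incl

/-- The operator gauging map `𝒢[O] = Σ_{s : I → ZMod 2} C^s (O ⊗ |f_0⟩⟨f_0|) C^s`,
where `O ⊗ |f_0⟩⟨f_0| = incl ∘ O ∘ res0`. -/
def gaugeOp (O : Module.End ℂ (HS I)) : Module.End ℂ (HS2 I J) :=
  ∑ s : I → ZMod 2, Cprod A s * (incl ∘ₗ O ∘ₗ res0) * Cprod A s

/-- The joint fixed subspace `{v | C_i v = v for all i}` of the gauge constraints. -/
def fixedSub : Submodule ℂ (HS2 I J) where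
  carrier := {v | ∀ i, C A i v = v}
  add_mem' := by
    intro x y hx hy i
    rw [map_add, hx i, hy i]
  zero_mem' := by
    intro i
    simp
  smul_mem' := by
    intro c x hx i
    rw [map_smul, hx i]

/-- The symmetric subspace `{ψ | X(s) ψ = ψ for all s with ∂s = 0}` of the matter space. -/
def symmSub : Submodule ℂ (HS I) where
  carrier := {ψ | ∀ s, bnd A s = 0 → XOp s ψ = ψ}
  add_mem' := by
    intro x y hx hy s hs
    rw [map_add, hx s hs, hy s hs]
  zero_mem' := by
    intro s hs
    simp
  smul_mem' := by
    intro c x hx s hs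
    rw [map_smul, hx s hs]

/-- The cluster stabilizer `K_i = X(χ_i) ⊗ Z_g(∂χ_i)`. -/
def Kst (i : I) : Module.End ℂ (HS2 I J) := XZOp (chi i) (bnd A (chi i))

/-- The cluster stabilizer `L_j = Z(δκ_j) ⊗ X_g(κ_j)`. -/
def Lst (j : J) : Module.End ℂ (HS2 I J) := ZXOp (cobnd A (kap j)) (kap j)

/-- The disentangling circuit of controlled-X gates from each matter qubit to its
adjacent gauge qubits: `V (e_a ⊗ f_b) = e_a ⊗ f_{b + ∂a}`. -/
def Vequiv : HS2 I J ≃ₗ[ℂ] HS2 I J where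
  toFun ψ := WithLp.toLp 2 (fun ab => ψ (ab.1, ab.2 + bnd A ab.1))
  invFun ψ := WithLp.toLp 2 (fun ab => ψ (ab.1, ab.2 + bnd A ab.1))
  map_add' _ _ := rfl
  map_smul' _ _ := rfl
  left_inv ψ := by
    ext ab
    show ψ (ab.1, ab.2 + bnd A ab.1 + bnd A ab.1) = ψ ab
    rw [add_assoc, zmodfun_add_self, add_zero]
  right_inv ψ := by
    ext ab
    show ψ (ab.1, ab.2 + bnd A ab.1 + bnd A ab.1) = ψ ab
    rw [add_assoc, zmodfun_add_self, add_zero]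

/-- The circuit of controlled-Z gates along the edges of the bipartite graph:
`U (e_a ⊗ f_b) = (-1)^{Σ_j (∂a)(j)·b(j)} e_a ⊗ f_b`. -/
def Uequiv : HS2 I J ≃ₗ[ℂ] HS2 I J where
  toFun ψ := WithLp.toLp 2 (fun ab => sgn (∑ j, bnd A ab.1 j * ab.2 j) * ψ ab)
  invFun ψ := WithLp.toLp 2 (fun ab => sgn (∑ j, bnd A ab.1 j * ab.2 j) * ψ ab)
  map_add' ψ φ := by
    ext ab
    exact mul_add _ _ _
  map_smul' c ψ := by
    ext ab
    simp only [RingHom.id_apply, PiLp.smul_apply, smul_eq_mul]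
    ring
  left_inv ψ := by
    ext ab
    show sgn _ * (sgn _ * ψ ab) = ψ ab
    rw [← mul_assoc, sgn_mul_self, one_mul]
  right_inv ψ := by
    ext ab
    show sgn _ * (sgn _ * ψ ab) = ψ ab
    rw [← mul_assoc, sgn_mul_self, one_mul]



/-! ### Auxiliary lemmas for Statement 5 -/

lemma bnd_add (p q : I → ZMod 2) : bnd A (p + q) = bnd A p + bnd A q := by
  funext j
  simp [bnd, Finset.sum_add_distrib]

lemma bnd_zero : bnd A (0 : I → ZMod 2) = 0 := by
  funext j; simp [bnd]

lemma XXOp_one : (XXOp (0 : I → ZMod 2) (0 : J → ZMod 2) : Module.End ℂ (HS2 I J)) = 1 := by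
  apply LinearMap.ext; intro ψ; ext ab
  show ψ (ab.1 + 0, ab.2 + 0) = ψ ab
  rw [add_zero, add_zero]

lemma noncommProd_C (T : Finset I) :
    T.noncommProd (fun i => C A i) (fun i _ j _ _ => C_commute A i j)
      = XXOp (∑ i ∈ T, chi i) (bnd A (∑ i ∈ T, chi i)) := by
  induction T using Finset.cons_induction with
  | empty =>
      erw [Finset.noncommProd_empty]
      rw [Finset.sum_empty, bnd_zero, XXOp_one]
  | cons a T h ih =>
      erw [Finset.noncommProd_cons]
      rw [ih, Finset.sum_cons]
      show (XXOp (chi a) (bnd A (chi a)) : Module.End ℂ (HS2 I J)) * _ = _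
      rw [XXOp_mul, ← bnd_add]

/-- The indicator pattern of a subset. -/
def toPat (U : Finset I) : I → ZMod 2 := fun x => if x ∈ U then 1 else 0

/-- The support of a pattern. -/
def toSet (s : I → ZMod 2) : Finset I := Finset.univ.filter (fun i => s i = 1)

lemma chiSum_eq_toPat (U : Finset I) : (∑ i ∈ U, chi i) = toPat U := by
  funext x
  rw [Finset.sum_apply]
  simp only [chi]
  rw [Finset.sum_pi_single]
  rfl

lemma toSet_toPat (U : Finset I) : toSet (toPat U) = U := by
  ext x
  simp only [toSet, Finset.mem_filter, Finset.mem_univ, true_and]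
  simp only [toPat]
  constructor
  · intro h
    by_contra hx
    rw [if_neg hx] at h
    exact absurd h (by decide)
  · intro h; rw [if_pos h]

lemma toPat_toSet (s : I → ZMod 2) : toPat (toSet s) = s := by
  have h01 : ∀ z : ZMod 2, z ≠ 1 → z = 0 := by decide
  funext x
  simp only [toPat, toSet, Finset.mem_filter, Finset.mem_univ, true_and]
  by_cases h : s x = 1
  · rw [if_pos h, h]
  · rw [if_neg h, h01 _ h]

lemma toPat_bijective : Function.Bijective (toPat (I := I)) :=
  Function.bijective_iff_has_inverse.mpr ⟨toSet, toSet_toPat, toPat_toSet⟩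

lemma Cprod_eq (s : I → ZMod 2) :
    Cprod A s = XXOp s (bnd A s) := by
  rw [Cprod, noncommProd_C]
  have : (∑ i ∈ Finset.univ.filter (fun i => s i = 1), chi i) = s := by
    rw [chiSum_eq_toPat]
    exact toPat_toSet s
  rw [this]

lemma noncommProd_half (T : Finset I) :
    (T.noncommProd (fun i => (2:ℂ)⁻¹ • (1 + C A i)) (fun i _ j _ _ => Chalf_commute A i j))
      = ((2:ℂ)⁻¹) ^ T.card • ∑ U ∈ T.powerset,
          (XXOp (∑ i ∈ U, chi i) (bnd A (∑ i ∈ U, chi i)) : Module.End ℂ (HS2 I J)) := by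
  induction T using Finset.cons_induction with
  | empty =>
      erw [Finset.noncommProd_empty]
      rw [Finset.powerset_empty, Finset.sum_singleton,
        Finset.sum_empty, bnd_zero, XXOp_one, Finset.card_empty, pow_zero, one_smul]
  | cons a T h ih =>
      erw [Finset.noncommProd_cons]
      rw [ih, Finset.cons_eq_insert,
        Finset.sum_powerset_insert h, Finset.card_insert_of_notMem h]
      rw [smul_mul_assoc, mul_smul_comm, smul_smul, ← pow_succ']
      congr 1
      rw [add_mul, one_mul, Finset.mul_sum]
      congr 1
      refine Finset.sum_congr rfl (fun U hU => ?_)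
      have haU : a ∉ U := fun hx => h (Finset.mem_powerset.mp hU hx)
      show (XXOp (chi a) (bnd A (chi a)) : Module.End ℂ (HS2 I J)) * _ = _
      rw [XXOp_mul, ← bnd_add, Finset.sum_insert haU]

lemma Pexpand :
    ((2:ℂ) ^ Fintype.card I) • Pproj A
      = ∑ s : I → ZMod 2, (XXOp s (bnd A s) : Module.End ℂ (HS2 I J)) := by
  rw [Pproj, noncommProd_half, smul_smul, Finset.card_univ,
    show ((2:ℂ) ^ Fintype.card I) * ((2:ℂ)⁻¹) ^ Fintype.card I = 1 by
      rw [← mul_pow]; norm_num,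
    one_smul, Finset.powerset_univ]
  refine Fintype.sum_bijective toPat toPat_bijective _ _ (fun U => ?_)
  rw [chiSum_eq_toPat]

lemma res0_XXOp_incl (u : I → ZMod 2) (q : J → ZMod 2) :
    (res0 ∘ₗ ((XXOp u q : Module.End ℂ (HS2 I J)) ∘ₗ incl) : HS I →ₗ[ℂ] HS I)
      = if q = 0 then (XOp u : Module.End ℂ (HS I)) else 0 := by
  by_cases h : q = 0
  · rw [if_pos h]
    apply LinearMap.ext; intro ψ; ext a
    show (if ((0 : J → ZMod 2) + q) = 0 then ψ (a + u) else 0) = ψ (a + u)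
    rw [zero_add, if_pos h]
  · rw [if_neg h]
    apply LinearMap.ext; intro ψ; ext a
    show (if ((0 : J → ZMod 2) + q) = 0 then ψ (a + u) else 0) = 0
    rw [zero_add, if_neg h]

lemma term_eq (O : Module.End ℂ (HS I))
    (hO : ∀ s : I → ZMod 2, bnd A s = 0 → O * XOp s = XOp s * O) (s t : I → ZMod 2) :
    ((XXOp s (bnd A s) : Module.End ℂ (HS2 I J)) * (incl ∘ₗ O ∘ₗ res0)
        * XXOp s (bnd A s)) ∘ₗ ((XXOp t (bnd A t) : Module.End ℂ (HS2 I J)) ∘ₗ incl)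
      = if bnd A (s + t) = 0
          then (XXOp t (bnd A t) : Module.End ℂ (HS2 I J)) ∘ₗ (incl ∘ₗ O)
          else 0 := by
  by_cases h : bnd A (s + t) = 0
  · rw [if_pos h]
    have hst : bnd A s + bnd A t = 0 := by rw [← bnd_add]; exact h
    have hts : bnd A s = bnd A t := by
      calc bnd A s = bnd A s + (bnd A t + bnd A t) := by
              rw [zmodfun_add_self, add_zero]
        _ = (bnd A s + bnd A t) + bnd A t := by rw [add_assoc]
        _ = bnd A t := by rw [hst, zero_add]
    apply LinearMap.ext; intro ψ; ext ab
    have hres : res0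
        (XXOp s (bnd A s) (XXOp t (bnd A t) (incl ψ)))
        = XOp (s + t) ψ := by
      ext x
      show (if ((0 : J → ZMod 2) + bnd A s + bnd A t) = 0 then ψ (x + s + t) else 0)
        = ψ (x + (s + t))
      rw [zero_add, hst, if_pos rfl, add_assoc]
    have hOc : O (XOp (s + t) ψ) = XOp (s + t) (O ψ) := by
      have := DFunLike.congr_fun (hO (s + t) h) ψ
      exact this
    show (if ab.2 + bnd A s = 0
        then (O (res0 (XXOp s (bnd A s) (XXOp t (bnd A t) (incl ψ)))))
              (ab.1 + s)
        else 0)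
      = (if ab.2 + bnd A t = 0 then (O ψ) (ab.1 + t) else 0)
    rw [hres, hOc, hts]
    by_cases hb : ab.2 + bnd A t = 0
    · rw [if_pos hb, if_pos hb]
      show (O ψ) (ab.1 + s + (s + t)) = (O ψ) (ab.1 + t)
      have harg : ab.1 + s + (s + t) = ab.1 + t := by
        calc ab.1 + s + (s + t) = ab.1 + (s + (s + t)) := by rw [add_assoc]
          _ = ab.1 + ((s + s) + t) := by rw [← add_assoc s s t]
          _ = ab.1 + t := by rw [zmodfun_add_self, zero_add]
      rw [harg]
    · rw [if_neg hb, if_neg hb]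
  · rw [if_neg h]
    have hst : bnd A s + bnd A t ≠ 0 := by rw [← bnd_add]; exact h
    apply LinearMap.ext; intro ψ; ext ab
    have hres : res0
        (XXOp s (bnd A s) (XXOp t (bnd A t) (incl ψ)))
        = (0 : HS I) := by
      ext x
      show (if ((0 : J → ZMod 2) + bnd A s + bnd A t) = 0 then ψ (x + s + t) else 0) = 0
      rw [zero_add, if_neg hst]
    show (if ab.2 + bnd A s = 0
        then (O (res0 (XXOp s (bnd A s) (XXOp t (bnd A t) (incl ψ)))))
              (ab.1 + s)
        else 0)
      = (0 : HS2 I J) ab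
    rw [hres, map_zero]
    simp

/-- For every symmetric operator `O`, the intertwining identity
`𝒢[O] ∘ G = |S| · (G ∘ O)` holds. -/
theorem gaugeOp_intertwines (A : J → Finset I) (O : Module.End ℂ (HS I))
    (hO : ∀ s : I → ZMod 2, bnd A s = 0 → O * XOp s = XOp s * O) :
    gaugeOp A O ∘ₗ Gmap A
      = (Nat.card {s : I → ZMod 2 // bnd A s = 0} : ℂ) • (Gmap A ∘ₗ O) := by
  classical
  have h2 : ((2:ℂ) ^ Fintype.card I) ≠ 0 := pow_ne_zero _ two_ne_zero
  apply smul_right_injective (HS I →ₗ[ℂ] HS2 I J) h2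
  show ((2:ℂ) ^ Fintype.card I) • (gaugeOp A O ∘ₗ Gmap A)
      = ((2:ℂ) ^ Fintype.card I) •
          ((Nat.card {s : I → ZMod 2 // bnd A s = 0} : ℂ) • (Gmap A ∘ₗ O))
  have hsum_comp : ∀ (f : (I → ZMod 2) → (HS2 I J →ₗ[ℂ] HS2 I J))
      (g : HS I →ₗ[ℂ] HS2 I J),
      (∑ s : I → ZMod 2, f s) ∘ₗ g = ∑ s : I → ZMod 2, (f s ∘ₗ g) := by
    intro f g
    apply LinearMap.ext; intro ψ
    simp [LinearMap.sum_apply]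
  have hcomp_sum : ∀ (f : Module.End ℂ (HS2 I J))
      (g : (I → ZMod 2) → (HS I →ₗ[ℂ] HS2 I J)),
      f ∘ₗ (∑ s : I → ZMod 2, g s) = ∑ s : I → ZMod 2, (f ∘ₗ g s) := by
    intro f g
    apply LinearMap.ext; intro ψ
    simp [LinearMap.sum_apply]
  calc ((2:ℂ) ^ Fintype.card I) • (gaugeOp A O ∘ₗ Gmap A)
      = gaugeOp A O ∘ₗ ((((2:ℂ) ^ Fintype.card I) • Pproj A) ∘ₗ incl) := by
        rw [Gmap, LinearMap.smul_comp, LinearMap.comp_smul]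
    _ = ∑ s : I → ZMod 2, ∑ t : I → ZMod 2,
          ((XXOp s (bnd A s) : Module.End ℂ (HS2 I J)) * (incl ∘ₗ O ∘ₗ res0)
            * XXOp s (bnd A s)) ∘ₗ
            ((XXOp t (bnd A t) : Module.End ℂ (HS2 I J)) ∘ₗ incl) := by
        rw [Pexpand, gaugeOp, hsum_comp]
        refine Finset.sum_congr rfl (fun s _ => ?_)
        rw [Cprod_eq, hsum_comp, hcomp_sum]
    _ = ∑ s : I → ZMod 2, ∑ t : I → ZMod 2,
          (if bnd A (s + t) = 0
            then (XXOp t (bnd A t) : Module.End ℂ (HS2 I J)) ∘ₗ (incl ∘ₗ O)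
            else 0) := by
        refine Finset.sum_congr rfl (fun s _ => Finset.sum_congr rfl (fun t _ => ?_))
        exact term_eq A O hO s t
    _ = ∑ t : I → ZMod 2, ∑ s : I → ZMod 2,
          (if bnd A s = 0
            then (XXOp t (bnd A t) : Module.End ℂ (HS2 I J)) ∘ₗ (incl ∘ₗ O)
            else 0) := by
        rw [Finset.sum_comm]
        refine Finset.sum_congr rfl (fun t _ => ?_)
        exact Fintype.sum_equiv (Equiv.addRight t) _ _ (fun s => rfl)
    _ = ∑ t : I → ZMod 2,
          ((Finset.univ.filter (fun s : I → ZMod 2 => bnd A s = 0)).card : ℂ) •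
            ((XXOp t (bnd A t) : Module.End ℂ (HS2 I J)) ∘ₗ (incl ∘ₗ O)) := by
        refine Finset.sum_congr rfl (fun t _ => ?_)
        rw [Finset.sum_ite, Finset.sum_const, Finset.sum_const_zero, add_zero,
          Nat.cast_smul_eq_nsmul]
    _ = ((2:ℂ) ^ Fintype.card I) •
          ((Nat.card {s : I → ZMod 2 // bnd A s = 0} : ℂ) • (Gmap A ∘ₗ O)) := by
        rw [← Finset.smul_sum]
        have hcard : ((Finset.univ.filter (fun s : I → ZMod 2 => bnd A s = 0)).card : ℂ)
            = (Nat.card {s : I → ZMod 2 // bnd A s = 0} : ℂ) := by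
          rw [Nat.card_eq_fintype_card, Fintype.card_subtype]
        rw [hcard, smul_comm]
        congr 1
        rw [Gmap, LinearMap.comp_assoc, ← LinearMap.smul_comp, Pexpand, hsum_comp]

end Pair

end GaugingFractal
end
end

section
/- Flux operators commute with the gauged theory: if k : J → ZMod 2 satisfies δk = 0 (i.e. Σ_{j : i ∈ A j} k(j) = 0 for every i ∈ I), then (a) the flux operator 1 ⊗ Z_g(k) commutes with every gauge constraint C_i, (b) 1 ⊗ Z_g(k) commutes with 𝒢[O] for every linear operator O on H_m, and (c) (1 ⊗ Z_g(k)) ∘ G = G, so gauged states carry flat gauge connection. -/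
set_option linter.unusedSectionVars false

noncomputable section

namespace GaugingFractal

section Pair

variable {I J : Type*} [Fintype I] [DecidableEq I] [Fintype J] [DecidableEq J]

variable (A : J → Finset I)

lemma sgn_add (s t : ZMod 2) : sgn (s + t) = sgn s * sgn t := by
  unfold sgn
  rw [ZMod.val_add, ← pow_add, ← neg_one_pow_eq_pow_mod_two]

lemma bnd_chi (A : J → Finset I) (i : I) (j : J) :
    bnd A (chi i) j = if i ∈ A j then 1 else 0 := by
  simp [bnd, chi, Finset.sum_pi_single']

lemma sum_k_bnd_chi (A : J → Finset I) (k : J → ZMod 2) (hk : cobnd A k = 0) (i : I) :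
    ∑ j, k j * bnd A (chi i) j = 0 := by
  have h := congrFun hk i
  simp only [cobnd, Pi.zero_apply] at h
  calc ∑ j, k j * bnd A (chi i) j
      = ∑ j ∈ Finset.univ.filter (fun j => i ∈ A j), k j := by
        rw [Finset.sum_filter]
        refine Finset.sum_congr rfl fun j _ => ?_
        rw [bnd_chi]
        by_cases hij : i ∈ A j <;> simp [hij]
    _ = 0 := h

lemma IZ_comm_C (A : J → Finset I) (k : J → ZMod 2) (hk : cobnd A k = 0) (i : I) :
    (IZOp k : Module.End ℂ (HS2 I J)) * C A i = C A i * IZOp k := by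
  apply LinearMap.ext
  intro ψ
  ext ab
  show sgn (∑ j, k j * ab.2 j) * ψ (ab.1 + 0 + chi i, ab.2 + bnd A (chi i))
      = sgn (∑ j, k j * (ab.2 + bnd A (chi i)) j)
        * ψ (ab.1 + chi i + 0, ab.2 + bnd A (chi i))
  have hsum : ∑ j, k j * (ab.2 + bnd A (chi i)) j = ∑ j, k j * ab.2 j := by
    simp only [Pi.add_apply, mul_add, Finset.sum_add_distrib,
      sum_k_bnd_chi A k hk i, add_zero]
  rw [hsum, add_zero, add_zero]

lemma IZ_incl (A : J → Finset I) (k : J → ZMod 2) :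
    (IZOp k : Module.End ℂ (HS2 I J)) ∘ₗ incl = incl := by
  apply LinearMap.ext
  intro ψ
  ext ab
  show sgn (∑ j, k j * ab.2 j) * (if ab.2 = 0 then ψ (ab.1 + 0) else 0)
      = if ab.2 = 0 then ψ ab.1 else 0
  by_cases h : ab.2 = 0
  · simp only [h, if_true]
    rw [add_zero]
    simp [sgn]
  · simp [h]

lemma res0_IZ (A : J → Finset I) (k : J → ZMod 2) :
    (res0 : HS2 I J →ₗ[ℂ] HS I) ∘ₗ IZOp k = res0 := by
  apply LinearMap.ext
  intro ψ
  ext a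
  show sgn (∑ j, k j * (0 : J → ZMod 2) j) * ψ (a + 0, 0) = ψ (a, 0)
  rw [add_zero]
  simp [sgn]

lemma IZ_comm_mid (A : J → Finset I) (k : J → ZMod 2) (O : Module.End ℂ (HS I)) :
    Commute (IZOp k : Module.End ℂ (HS2 I J)) (incl ∘ₗ O ∘ₗ res0) := by
  have h1 : (IZOp k : Module.End ℂ (HS2 I J)) * (incl ∘ₗ O ∘ₗ res0)
      = incl ∘ₗ O ∘ₗ res0 := by
    show (IZOp k : Module.End ℂ (HS2 I J)) ∘ₗ (incl ∘ₗ O ∘ₗ res0) = _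
    rw [← LinearMap.comp_assoc, ← LinearMap.comp_assoc, IZ_incl A k, LinearMap.comp_assoc]
  have h2 : (incl ∘ₗ O ∘ₗ res0 : Module.End ℂ (HS2 I J)) * IZOp k
      = incl ∘ₗ O ∘ₗ res0 := by
    show (incl ∘ₗ O ∘ₗ res0 : Module.End ℂ (HS2 I J)) ∘ₗ IZOp k = _
    rw [LinearMap.comp_assoc, LinearMap.comp_assoc, res0_IZ A k]
  rw [Commute, SemiconjBy, h1, h2]

lemma IZ_comm_Cprod (A : J → Finset I) (k : J → ZMod 2) (hk : cobnd A k = 0)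
    (s : I → ZMod 2) :
    Commute (IZOp k : Module.End ℂ (HS2 I J)) (Cprod A s) :=
  Finset.noncommProd_commute _ _ _ _ fun i _ => IZ_comm_C A k hk i

lemma IZ_comm_Pproj (A : J → Finset I) (k : J → ZMod 2) (hk : cobnd A k = 0) :
    Commute (IZOp k : Module.End ℂ (HS2 I J)) (Pproj A) :=
  Finset.noncommProd_commute _ _ _ _ fun i _ =>
    (((Commute.one_right _).add_right (IZ_comm_C A k hk i))).smul_right _

/-- If `δk = 0` then the flux operator `1 ⊗ Z_g(k)` (a) commutes with every
gauge constraint `C_i`, (b) commutes with `𝒢[O]` for every operator `O`, and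
(c) satisfies `(1 ⊗ Z_g(k)) ∘ G = G`. -/
theorem flux_operators_commute (A : J → Finset I) (k : J → ZMod 2) (hk : cobnd A k = 0) :
    (∀ i : I, Commute (IZOp k : Module.End ℂ (HS2 I J)) (C A i))
    ∧ (∀ O : Module.End ℂ (HS I),
        Commute (IZOp k : Module.End ℂ (HS2 I J)) (gaugeOp A O))
    ∧ (IZOp k : Module.End ℂ (HS2 I J)) ∘ₗ Gmap A = Gmap A := by
  refine ⟨fun i => IZ_comm_C A k hk i, fun O => ?_, ?_⟩
  · unfold gaugeOp
    exact Commute.sum_right _ _ _ fun s _ =>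
      ((IZ_comm_Cprod A k hk s).mul_right (IZ_comm_mid A k O)).mul_right
        (IZ_comm_Cprod A k hk s)
  · unfold Gmap
    rw [← LinearMap.comp_assoc]
    have h : (IZOp k : Module.End ℂ (HS2 I J)) ∘ₗ Pproj A = Pproj A ∘ₗ IZOp k :=
      IZ_comm_Pproj A k hk
    rw [h, LinearMap.comp_assoc, IZ_incl A k]

end Pair

end GaugingFractal
end
end
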